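/- Let n ≥ 3, let D be an n×n dissimilarity matrix, and let π be a permutation of [n] such that the matrix (k,l) ↦ D(π(k), π(l)) is strict circular Robinson (i.e. π is a Robinson ordering for D). If i, j ∈ [n] with j ≠ i and D(i,j) = min{D(i,k) : k ∈ [n], k ≠ i} (j is a nearest neighbour of i), then i and j are consecutive in the ordering π: π⁻¹(j) = (π⁻¹(i) + 1) mod n or π⁻¹(j) = (π⁻¹(i) − 1) mod n. -/

import Mathlib

/-- The standard cyclic order on `Fin n`. -/
def CycOrd {n : ℕ} (i j k : Fin n) : Prop :=
  (i < j ∧ j < k) ∨ (j < k ∧ k < i) ∨ (k < i ∧ i < j)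

/-- `i,j,k,l` are pairwise distinct and cyclically ordered. -/
def CycOrd4 {n : ℕ} (i j k l : Fin n) : Prop :=
  i ≠ j ∧ i ≠ k ∧ i ≠ l ∧ j ≠ k ∧ j ≠ l ∧ k ≠ l ∧ CycOrd i j k ∧ CycOrd i k l

/-- `D` is a dissimilarity matrix. -/
def IsDissim {n : ℕ} (D : Fin n → Fin n → ℝ) : Prop :=
  (∀ i j, D i j = D j i) ∧ (∀ i j, 0 ≤ D i j) ∧ (∀ i, D i i = 0)

/-- `D` is a strict circular Robinson matrix. -/
def StrictCircRobinson {n : ℕ} (D : Fin n → Fin n → ℝ) : Prop :=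
  ∀ i j k l : Fin n, CycOrd4 i j k l → min (D j k) (D k l) < D i k

lemma add_one_val {n : ℕ} [NeZero n] (hn : 3 ≤ n) (x : Fin n) :
    ((x + 1).val = x.val + 1 ∧ x.val + 1 < n) ∨ ((x + 1).val = 0 ∧ x.val + 1 = n) := by
  have h1 : (1 : Fin n).val = 1 := by
    rw [Fin.val_one']; exact Nat.mod_eq_of_lt (by omega)
  have hadd : (x + 1).val = (x.val + 1) % n := by rw [Fin.val_add, h1]
  have hx := x.isLt
  rcases Nat.lt_or_ge (x.val + 1) n with h | h
  · left; rw [hadd, Nat.mod_eq_of_lt h]; exact ⟨rfl, h⟩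
  · right
    have he : x.val + 1 = n := by omega
    refine ⟨?_, he⟩
    rw [hadd, he, Nat.mod_self]

/-- If `π` is a Robinson ordering for `D` (i.e. the `π`-conjugated matrix is strict
circular Robinson), then every nearest neighbour `j` of `i` is consecutive to `i`
in the ordering `π`. -/
theorem statement7 (n : ℕ) [NeZero n] (hn : 3 ≤ n) (D : Fin n → Fin n → ℝ)
    (hD : IsDissim D) (π : Equiv.Perm (Fin n))
    (hπ : StrictCircRobinson (fun k l => D (π k) (π l)))
    (i j : Fin n) (hji : j ≠ i) (hmin : ∀ k : Fin n, k ≠ i → D i j ≤ D i k) :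
    π.symm j = π.symm i + 1 ∨ π.symm j = π.symm i - 1 := by
  obtain ⟨hsym, hnn, hdiag⟩ := hD
  set a := π.symm i with ha
  set b := π.symm j with hb
  by_contra hcon
  push_neg at hcon
  obtain ⟨h1, h2⟩ := hcon
  have hπa : π a = i := Equiv.apply_symm_apply π i
  have hπb : π b = j := Equiv.apply_symm_apply π j
  have hba : b ≠ a := fun e => hji (by rw [← hπb, e, hπa])
  have hA := add_one_val hn a
  have hc : (a - 1) + 1 = a := sub_add_cancel a 1
  have hM := add_one_val hn (a - 1)
  rw [hc] at hM
  have hav := a.isLt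
  have hbv := b.isLt
  have hmv := (a - 1).isLt
  have hb1 : b.val ≠ (a - 1).val := fun e => h2 (Fin.ext e)
  have hb2 : b.val ≠ a.val := fun e => hba (Fin.ext e)
  have hb3 : b.val ≠ (a + 1).val := fun e => h1 (Fin.ext e)
  have hcyc : CycOrd4 b (a - 1) a (a + 1) := by
    simp only [CycOrd4, CycOrd, Fin.lt_def, ne_eq, Fin.ext_iff]
    omega
  have key := hπ b (a - 1) a (a + 1) hcyc
  simp only at key
  have hm1 : π (a - 1) ≠ i := by
    rw [← hπa]
    intro e
    have := π.injective e
    have : (a - 1).val = a.val := by rw [this]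
    omega
  have hm2 : π (a + 1) ≠ i := by
    rw [← hπa]
    intro e
    have := π.injective e
    have : (a + 1).val = a.val := by rw [this]
    omega
  have m1 : D i j ≤ D i (π (a - 1)) := hmin _ hm1
  have m2 : D i j ≤ D i (π (a + 1)) := hmin _ hm2
  rw [hπa, hπb] at key
  rw [hsym (π (a - 1)) i, hsym j i] at key
  rcases min_lt_iff.mp key with h | h <;> linarith
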